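/- Let S be a weighted marked graph system without source places (no place having an output transition but no input transition). Then S is live if and only if every circuit P-subsystem of S is live. -/

import Mathlib

/-- A labelled transition system with initial state. -/
structure LTS (S L : Type) where
  tr : S → L → S → Prop
  init : S

namespace LTS

/-- Reachability between states of an LTS (directed paths of arcs). -/
def reach {S L : Type} (A : LTS S L) : S → S → Prop :=
  Relation.ReflTransGen (fun s s' => ∃ t, A.tr s t s')

/-- An LTS is reversible if every state is reachable from the initial state
and the initial state is reachable from every state. -/
def reversible {S L : Type} (A : LTS S L) : Prop :=
  ∀ s : S, A.reach A.init s ∧ A.reach s A.init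

end LTS

/-- Isomorphism of labelled transition systems. -/
def ltsIso {S1 S2 L : Type} (A : LTS S1 L) (B : LTS S2 L) : Prop :=
  ∃ ζ : S1 ≃ S2, ζ A.init = B.init ∧ ∀ s t s', A.tr s t s' ↔ B.tr (ζ s) t (ζ s')

/-- A weighted Petri net with places `P` and transitions `T`:
`pre p t` is the weight of the arc from `p` to `t`, `post t p` of the arc from `t` to `p`. -/
structure PetriNet (P T : Type) where
  pre : P → T → ℕ
  post : T → P → ℕ

namespace PetriNet

variable {P T : Type}

/-- A transition `t` is enabled at marking `M`. -/
def enabled (N : PetriNet P T) (M : P → ℕ) (t : T) : Prop :=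
  ∀ p, N.pre p t ≤ M p

/-- A place `p` is enabled by a marking `M`. -/
def placeEnabled (N : PetriNet P T) (M : P → ℕ) (p : P) : Prop :=
  ∀ t, N.pre p t ≤ M p

/-- The marking obtained by firing `t` at `M`. -/
def fire (N : PetriNet P T) (M : P → ℕ) (t : T) : P → ℕ :=
  fun p => M p - N.pre p t + N.post t p

/-- `M [t⟩ M'`. -/
def step (N : PetriNet P T) (M : P → ℕ) (t : T) (M' : P → ℕ) : Prop :=
  N.enabled M t ∧ M' = N.fire M t

/-- A marking `M'` is reachable from `M` by a finite sequence of firings. -/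
def Reach (N : PetriNet P T) (M M' : P → ℕ) : Prop :=
  Relation.ReflTransGen (fun M1 M2 => ∃ t, N.step M1 t M2) M M'

/-- A sequence of transitions is firable from a marking. -/
def firable (N : PetriNet P T) : (P → ℕ) → List T → Prop
  | _, [] => True
  | M, t :: σ => N.enabled M t ∧ N.firable (N.fire M t) σ

/-- The marking reached after firing a sequence of transitions. -/
def fireSeq (N : PetriNet P T) : (P → ℕ) → List T → (P → ℕ)
  | M, [] => M
  | M, t :: σ => N.fireSeq (N.fire M t) σ

/-- A net is choice-free if every place has at most one output transition. -/
def choiceFree (N : PetriNet P T) : Prop :=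
  ∀ p t t', 0 < N.pre p t → 0 < N.pre p t' → t = t'

/-- A weighted marked graph: each place has at most one output and at most one input transition. -/
def wmg (N : PetriNet P T) : Prop :=
  N.choiceFree ∧ ∀ p t t', 0 < N.post t p → 0 < N.post t' p → t = t'

/-- A net is pure if no place is a side condition of some transition. -/
def isPure (N : PetriNet P T) : Prop :=
  ∀ p t, ¬(0 < N.pre p t ∧ 0 < N.post t p)

/-- Liveness: from every reachable marking, every transition can eventually fire again. -/
def live (N : PetriNet P T) (M0 : P → ℕ) : Prop :=
  ∀ (t : T) (M : P → ℕ), N.Reach M0 M → ∃ M', N.Reach M M' ∧ N.enabled M' t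

/-- The reachability graph of a system, as an LTS on the reachable markings. -/
def RG (N : PetriNet P T) (M0 : P → ℕ) : LTS {M : P → ℕ // N.Reach M0 M} T where
  tr := fun M t M' => N.step M.1 t M'.1
  init := ⟨M0, Relation.ReflTransGen.refl⟩

end PetriNet

/-- A system solves an LTS if its reachability graph is isomorphic to it. -/
def Solves {Pl T S : Type} (N : PetriNet Pl T) (M0 : Pl → ℕ) (A : LTS S T) : Prop :=
  ltsIso (N.RG M0) A

/-- CF-solvability of an LTS. -/
def CFSolvable {S L : Type} (A : LTS S L) : Prop :=
  ∃ (k : ℕ) (N : PetriNet (Fin k) L) (M0 : Fin k → ℕ), N.choiceFree ∧ Solves N M0 A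

/-- WMG-solvability of an LTS. -/
def WMGSolvable {S L : Type} (A : LTS S L) : Prop :=
  ∃ (k : ℕ) (N : PetriNet (Fin k) L) (M0 : Fin k → ℕ), N.wmg ∧ Solves N M0 A

/-- Solvability of an LTS by a pure choice-free system. -/
def PureCFSolvable {S L : Type} (A : LTS S L) : Prop :=
  ∃ (k : ℕ) (N : PetriNet (Fin k) L) (M0 : Fin k → ℕ),
    N.choiceFree ∧ N.isPure ∧ Solves N M0 A

/-- The circular LTS induced by a (nonempty) word `w`. -/
def circLTS {L : Type} (w : List L) (hw : 0 < w.length) : LTS (Fin w.length) L where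
  tr := fun s t s' => t = w.get s ∧ s'.val = (s.val + 1) % w.length
  init := ⟨0, hw⟩

/-- The Parikh vector of a word. -/
def parikh {L : Type} [DecidableEq L] (w : List L) (t : L) : ℕ := w.count t

/-- A vector of naturals is prime if the gcd of its components equals 1. -/
def primeVec {L : Type} [Fintype L] (Υ : L → ℕ) : Prop := Finset.univ.gcd Υ = 1

/-- A word is cyclically solvable by a WMG. -/
def cyclicWMGSolvable {L : Type} (w : List L) : Prop :=
  ∃ (hw : 0 < w.length) (k : ℕ) (N : PetriNet (Fin k) L) (M0 : Fin k → ℕ),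
    N.wmg ∧ Solves N M0 (circLTS w hw)

/-- A word is cyclically solvable by a CF net. -/
def cyclicCFSolvable {L : Type} (w : List L) : Prop :=
  ∃ (hw : 0 < w.length) (k : ℕ) (N : PetriNet (Fin k) L) (M0 : Fin k → ℕ),
    N.choiceFree ∧ Solves N M0 (circLTS w hw)

/-- A circuit net: places `p_0 … p_{k-1}` and transitions `τ 0 … τ (k-1)` arranged in a
single alternating cycle, `τ i` being the unique output of `p_i` and the unique input
of `p_{i+1 mod k}`. -/
def isCircuit {k : ℕ} {L : Type} (hk : 0 < k) (N : PetriNet (Fin k) L) : Prop :=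
  ∃ τ : Fin k ≃ L,
    (∀ (i : Fin k) (t : L), 0 < N.pre i t ↔ t = τ i) ∧
    (∀ (i : Fin k) (t : L), 0 < N.post t i ↔ t = τ ⟨(i.val + k - 1) % k, Nat.mod_lt _ hk⟩)

/-- A word is cyclically solvable by a circuit system. -/
def cyclicCircuitSolvable {L : Type} (v : List L) : Prop :=
  ∃ (hv : 0 < v.length) (k : ℕ) (hk : 0 < k) (N : PetriNet (Fin k) L) (M0 : Fin k → ℕ),
    isCircuit hk N ∧ Solves N M0 (circLTS v hv)

/-- The ordered pair `a b` is circularly adjacent in `w`. -/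
def cAdj {L : Type} (w : List L) (a b : L) : Prop :=
  a ≠ b ∧ ((∃ w1 w2, w = w1 ++ a :: b :: w2) ∨ ∃ w3, w = b :: w3 ++ [a])

/-- The projection of a word on a two-element sub-alphabet, as a word over that sub-alphabet. -/
def projPair {L : Type} [DecidableEq L] (w : List L) (a b : L) :
    List {x : L // x = a ∨ x = b} :=
  w.filterMap (fun x => if h : x = a ∨ x = b then some ⟨x, h⟩ else none)

/-- The Parikh vector `P_jq` of the segment of `w` read circularly from state `s_j`
to state `s_q` (empty when `j = q`). -/
def segParikh {L : Type} [DecidableEq L] (w : List L) (hw : 0 < w.length)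
    (j q : Fin w.length) (t : L) : ℕ :=
  ((List.range ((q.val + w.length - j.val) % w.length)).map
    (fun i => w.get ⟨(j.val + i) % w.length, Nat.mod_lt _ hw⟩)).count t

/-- A region of an LTS. -/
def isRegion {S L : Type} (A : LTS S L) (R : S → ℕ) (B F : L → ℕ) : Prop :=
  ∀ s t s', A.tr s t s' → B t ≤ R s ∧ R s' = R s - B t + F t

/-- `gcd_p`: the gcd of all (nonzero) input and output weights of a place. -/
def gcdPlace {Pl T : Type} [Fintype T] (N : PetriNet Pl T) (p : Pl) : ℕ :=
  Finset.univ.gcd (fun t => Nat.gcd (N.pre p t) (N.post t p))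

/-- Conservativeness of a net. -/
def conservative {Pl T : Type} [Fintype Pl] (N : PetriNet Pl T) : Prop :=
  ∃ X : Pl → ℕ, (∀ p, 1 ≤ X p) ∧
    ∀ t, ∑ p, (X p : ℤ) * ((N.post t p : ℤ) - (N.pre p t : ℤ)) = 0

/-- The P-subnet induced by a family of places. -/
def restrictNet {Pl T : Type} {k : ℕ} (N : PetriNet Pl T) (π : Fin k → Pl) :
    PetriNet (Fin k) T where
  pre := fun i t => N.pre (π i) t
  post := fun t i => N.post t (π i)

namespace PetriNet

variable {P T : Type} {N : PetriNet P T}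

theorem firable_append {M : P → ℕ} {σ ρ : List T} :
    N.firable M (σ ++ ρ) ↔ N.firable M σ ∧ N.firable (N.fireSeq M σ) ρ := by
  induction σ generalizing M with
  | nil => simp [firable, fireSeq]
  | cons t σ ih => simp [firable, fireSeq, ih, and_assoc]

theorem fireSeq_append {M : P → ℕ} {σ ρ : List T} :
    N.fireSeq M (σ ++ ρ) = N.fireSeq (N.fireSeq M σ) ρ := by
  induction σ generalizing M with
  | nil => simp [fireSeq]
  | cons t σ ih => simp [fireSeq, ih]

theorem reach_iff {M M' : P → ℕ} :
    N.Reach M M' ↔ ∃ σ, N.firable M σ ∧ N.fireSeq M σ = M' := by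
  constructor
  · intro h
    induction h with
    | refl => exact ⟨[], trivial, rfl⟩
    | tail _ hstep ih =>
      obtain ⟨σ, hf, hfs⟩ := ih
      obtain ⟨t, hen, rfl⟩ := hstep
      exact ⟨σ ++ [t], firable_append.2 ⟨hf, by simpa [firable, hfs] using hen⟩,
        by simp [fireSeq_append, fireSeq, hfs]⟩
  · rintro ⟨σ, hf, rfl⟩
    induction σ generalizing M with
    | nil => exact Relation.ReflTransGen.refl
    | cons t σ ih =>
      exact Relation.ReflTransGen.head ⟨t, hf.1, rfl⟩ (ih hf.2)

theorem reach_firable {M : P → ℕ} {σ : List T} (hf : N.firable M σ) :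
    N.Reach M (N.fireSeq M σ) := reach_iff.2 ⟨σ, hf, rfl⟩

end PetriNet
namespace PetriNet

variable {P T : Type} {N : PetriNet P T}

theorem cf_pre_eq_zero (hcf : N.choiceFree) {p : P} {u v : T} (huv : u ≠ v)
    (hv : 0 < N.pre p v) : N.pre p u = 0 := by
  by_contra h
  exact huv (hcf p u v (Nat.pos_of_ne_zero h) hv)

/-- Persistence: in a choice-free net, firing `u` keeps any other enabled `v` enabled. -/
theorem cf_persist (hcf : N.choiceFree) {M : P → ℕ} {u v : T} (huv : u ≠ v)
    (hu : N.enabled M u) (hv : N.enabled M v) : N.enabled (N.fire M u) v := by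
  intro p
  rcases Nat.eq_zero_or_pos (N.pre p v) with h0 | hpos
  · simp [h0]
  · have hpu : N.pre p u = 0 := cf_pre_eq_zero hcf huv hpos
    have := hv p
    simp only [fire, hpu]
    omega

/-- Commutation of firing of distinct transitions in a choice-free net. -/
theorem cf_fire_comm (hcf : N.choiceFree) {M : P → ℕ} {u v : T} (huv : u ≠ v)
    (hu : N.enabled M u) (hv : N.enabled M v) :
    N.fire (N.fire M u) v = N.fire (N.fire M v) u := by
  funext p
  have hup := hu p
  have hvp := hv p
  rcases Nat.eq_zero_or_pos (N.pre p v) with h0 | hpos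
  · rcases Nat.eq_zero_or_pos (N.pre p u) with h0' | hpos'
    · simp [fire, h0, h0']; omega
    · have : N.pre p v = 0 := h0
      simp [fire, h0]; omega
  · have hpu : N.pre p u = 0 := cf_pre_eq_zero hcf huv hpos
    simp [fire, hpu]; omega

/-- L1: an enabled transition not in a firable sequence stays enabled and commutes. -/
theorem cf_shift (hcf : N.choiceFree) {M : P → ℕ} {u : T} {σ : List T}
    (hu : N.enabled M u) (hf : N.firable M σ) (hne : u ∉ σ) :
    N.firable (N.fire M u) σ ∧
      N.fireSeq (N.fire M u) σ = N.fire (N.fireSeq M σ) u ∧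
      N.enabled (N.fireSeq M σ) u := by
  induction σ generalizing M with
  | nil => exact ⟨trivial, rfl, hu⟩
  | cons v σ ih =>
    have hvne : u ≠ v := fun h => hne (h ▸ List.mem_cons_self)
    obtain ⟨hv, hf'⟩ := hf
    have hu' : N.enabled (N.fire M v) u := cf_persist hcf (Ne.symm hvne) hv hu
    obtain ⟨ihf, ihfs, ihen⟩ := ih hu' hf' (fun h => hne (List.mem_cons_of_mem _ h))
    have hcomm := cf_fire_comm hcf hvne hu hv
    refine ⟨⟨cf_persist hcf hvne hu hv, ?_⟩, ?_, ihen⟩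
    · simpa [hcomm] using ihf
    · simpa [fireSeq, hcomm] using ihfs

end PetriNet
namespace PetriNet

variable {P T : Type} {N : PetriNet P T}

theorem mem_split_first {α : Type} {a : α} {l : List α} (h : a ∈ l) :
    ∃ s t, l = s ++ a :: t ∧ a ∉ s := by
  induction l with
  | nil => cases h
  | cons b l ih =>
    by_cases hab : a = b
    · exact ⟨[], l, by simp [hab], by simp⟩
    · rcases ih ((List.mem_cons.1 h).resolve_left hab) with ⟨s, t, rfl, hns⟩
      exact ⟨b :: s, t, rfl, by simp [hns, hab]⟩

/-- L3': an enabled transition occurring in a firable sequence can be fired first. -/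
theorem cf_pull (hcf : N.choiceFree) {M : P → ℕ} {u : T} {β1 β2 : List T}
    (hu : N.enabled M u) (hf : N.firable M (β1 ++ u :: β2)) (hne : u ∉ β1) :
    N.firable (N.fire M u) (β1 ++ β2) := by
  induction β1 generalizing M with
  | nil => exact hf.2
  | cons v β1 ih =>
    obtain ⟨hv, hf'⟩ := hf
    have hvne : u ≠ v := fun h => hne (h ▸ List.mem_cons_self)
    have hu' : N.enabled (N.fire M v) u := cf_persist hcf (Ne.symm hvne) hv hu
    have ihr := ih hu' hf' (fun h => hne (List.mem_cons_of_mem _ h))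
    refine ⟨cf_persist hcf hvne hu hv, ?_⟩
    rw [cf_fire_comm hcf hvne hu hv]
    simpa using ihr

/-- Keller's lemma, counting form. -/
theorem cf_keller (hcf : N.choiceFree) [DecidableEq T] {α : List T} :
    ∀ {M : P → ℕ} {β : List T}, N.firable M α → N.firable M β →
    ∃ γ, N.firable (N.fireSeq M α) γ ∧ ∀ u, β.count u ≤ α.count u + γ.count u := by
  induction α with
  | nil => intro M β _ hβ; exact ⟨β, hβ, by simp⟩
  | cons t α ih =>
    intro M β hα hβ
    by_cases ht : t ∈ β
    · obtain ⟨β1, β2, rfl, hne⟩ := mem_split_first ht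
      have h1 : N.firable (N.fire M t) (β1 ++ β2) := cf_pull hcf hα.1 hβ hne
      obtain ⟨γ, hγf, hγc⟩ := ih hα.2 h1
      refine ⟨γ, by simpa [fireSeq] using hγf, fun u => ?_⟩
      have := hγc u
      simp only [List.count_append, List.count_cons] at *
      by_cases hu : u = t <;> simp [hu] at * <;> omega
    · obtain ⟨h1, _, _⟩ := cf_shift hcf hα.1 hβ ht
      obtain ⟨γ, hγf, hγc⟩ := ih hα.2 h1
      refine ⟨γ, by simpa [fireSeq] using hγf, fun u => ?_⟩
      have := hγc u
      simp only [List.count_cons]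
      omega

/-- If a firable sequence contains `t`, then `t` gets enabled somewhere along it. -/
theorem firable_mem_enabled {M : P → ℕ} {σ : List T} {t : T}
    (hf : N.firable M σ) (ht : t ∈ σ) :
    ∃ M', N.Reach M M' ∧ N.enabled M' t := by
  induction σ generalizing M with
  | nil => cases ht
  | cons u σ ih =>
    by_cases hut : u = t
    · exact ⟨M, Relation.ReflTransGen.refl, hut ▸ hf.1⟩
    · rcases List.mem_cons.1 ht with h | h
      · exact absurd h.symm hut
      · obtain ⟨M', hr, he⟩ := ih hf.2 h
        exact ⟨M', Relation.ReflTransGen.head ⟨u, hf.1, rfl⟩ hr, he⟩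

end PetriNet
namespace PetriNet

variable {P T : Type} {N : PetriNet P T}

/-- From a live system, sequences with arbitrarily large counts are firable. -/
theorem live_counts [DecidableEq T] (hl : N.live M0) (L : List T) {M : P → ℕ}
    (hM : N.Reach M0 M) : ∃ σ, N.firable M σ ∧ ∀ u, L.count u ≤ σ.count u := by
  induction L generalizing M with
  | nil => exact ⟨[], trivial, by simp⟩
  | cons t L ih =>
    obtain ⟨M', hr, he⟩ := hl t M hM
    have hM'' : N.Reach M0 (N.fire M' t) :=
      (hM.trans hr).tail ⟨t, he, rfl⟩
    obtain ⟨σ', hf', hc'⟩ := ih hM''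
    obtain ⟨ρ, hρf, hρe⟩ := reach_iff.1 hr
    refine ⟨ρ ++ t :: σ', ?_, fun u => ?_⟩
    · exact firable_append.2 ⟨hρf, by rw [hρe]; exact ⟨he, hf'⟩⟩
    · have := hc' u
      simp only [List.count_append, List.count_cons] at *
      by_cases hu : u = t <;> simp [hu] at * <;> omega

end PetriNet

section Restrict

variable {Pl T : Type} {k : ℕ} {N : PetriNet Pl T} {π : Fin k → Pl}

theorem restrict_enabled {M : Pl → ℕ} {t : T} (h : N.enabled M t) :
    (restrictNet N π).enabled (fun i => M (π i)) t := fun i => h (π i)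

theorem restrict_fire {M : Pl → ℕ} {t : T} :
    (fun i => N.fire M t (π i)) = (restrictNet N π).fire (fun i => M (π i)) t := rfl

theorem restrict_firable {M : Pl → ℕ} {σ : List T} (h : N.firable M σ) :
    (restrictNet N π).firable (fun i => M (π i)) σ ∧
      (restrictNet N π).fireSeq (fun i => M (π i)) σ = fun i => N.fireSeq M σ (π i) := by
  induction σ generalizing M with
  | nil => exact ⟨trivial, rfl⟩
  | cons t σ ih =>
    obtain ⟨h1, h2⟩ := ih h.2
    exact ⟨⟨restrict_enabled h.1, h1⟩, h2⟩

theorem stmt17_forward {Pl T : Type} (N : PetriNet Pl T) (M0 : Pl → ℕ)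
    (hlive : N.live M0) (k : ℕ) (π : Fin k → Pl) (τ : Fin k → T)
    (hpre : ∀ (i : Fin k) (t : T), 0 < N.pre (π i) t ↔ t = τ i) :
    (restrictNet N π).live (fun i => M0 (π i)) := by
  classical
  set S := restrictNet N π with hS
  set m0 : Fin k → ℕ := fun i => M0 (π i) with hm0
  have hScf : S.choiceFree := by
    intro p t t' ht ht'
    have h1 := (hpre p t).1 ht
    have h2 := (hpre p t').1 ht'
    rw [h1, h2]
  intro t M hM
  by_cases hzero : ∀ i : Fin k, N.pre (π i) t = 0
  · exact ⟨M, Relation.ReflTransGen.refl, fun i => by simp [hS, restrictNet, hzero i]⟩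
  · push_neg at hzero
    obtain ⟨σ0, hσ0f, hσ0e⟩ := (PetriNet.reach_iff (N := S)).1 hM
    obtain ⟨σ, hσf, hσc⟩ := PetriNet.live_counts hlive (t :: σ0) Relation.ReflTransGen.refl
    have hσS : S.firable m0 σ := (restrict_firable hσf).1
    obtain ⟨γ, hγf, hγc⟩ := PetriNet.cf_keller hScf hσ0f hσS
    rw [hσ0e] at hγf
    have htγ : t ∈ γ := by
      have h1 := hγc t
      have h2 := hσc t
      simp only [List.count_cons_self] at h2
      have : 0 < γ.count t := by omega
      exact List.count_pos_iff.1 this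
    exact PetriNet.firable_mem_enabled hγf htγ

end Restrict
namespace PetriNet

variable {P T : Type} {N : PetriNet P T}

/-- A transition is dead at `M` if it never becomes enabled again. -/
def dead (N : PetriNet P T) (t : T) (M : P → ℕ) : Prop :=
  ∀ M', N.Reach M M' → ¬ N.enabled M' t

theorem dead_mono {t : T} {M M' : P → ℕ} (h : N.dead t M) (hr : N.Reach M M') :
    N.dead t M' := fun M'' hr' => h M'' (hr.trans hr')

theorem not_live_iff {M0 : P → ℕ} :
    ¬ N.live M0 ↔ ∃ t M, N.Reach M0 M ∧ N.dead t M := by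
  unfold live dead
  push_neg
  rfl

/-- One-step strip lemma for choice-free nets. -/
theorem cf_strip (hcf : N.choiceFree) {M M1 : P → ℕ} (hr : N.Reach M M1) :
    ∀ {u : T} {M2 : P → ℕ}, N.step M u M2 →
    ∃ M3, N.Reach M2 M3 ∧ (M1 = M3 ∨ ∃ v, N.step M1 v M3) := by
  induction hr using Relation.ReflTransGen.head_induction_on with
  | refl =>
    intro u M2 hstep
    exact ⟨M2, Relation.ReflTransGen.refl, Or.inr ⟨u, hstep⟩⟩
  | head hrel htail ih =>
    rename_i Ma Mm
    intro u M2 hstep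
    obtain ⟨v, hv, rfl⟩ := hrel
    obtain ⟨hu, rfl⟩ := hstep
    by_cases hvu : v = u
    · subst hvu
      exact ⟨M1, htail, Or.inl rfl⟩
    · have hen : N.enabled (N.fire Ma v) u := cf_persist hcf hvu hv hu
      obtain ⟨M3, h1, h2⟩ := ih (u := u) (M2 := N.fire (N.fire Ma v) u) ⟨hen, rfl⟩
      refine ⟨M3, Relation.ReflTransGen.head ⟨v, ?_, ?_⟩ h1, h2⟩
      · exact cf_persist hcf (Ne.symm hvu) hu hv
      · exact cf_fire_comm hcf hvu hv hu

/-- Confluence of choice-free nets. -/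
theorem cf_confluent (hcf : N.choiceFree) {M M1 M2 : P → ℕ}
    (h2 : N.Reach M M2) (h1 : N.Reach M M1) :
    ∃ M3, N.Reach M1 M3 ∧ N.Reach M2 M3 := by
  induction h2 using Relation.ReflTransGen.head_induction_on generalizing M1 with
  | refl => exact ⟨M1, Relation.ReflTransGen.refl, h1⟩
  | head hrel htail ih =>
    rename_i Ma Mm
    obtain ⟨v, hstep⟩ := hrel
    obtain ⟨M3', hr3, hcase⟩ := cf_strip hcf h1 hstep
    obtain ⟨M4, h14, h24⟩ := ih hr3
    rcases hcase with rfl | ⟨w, hw⟩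
    · exact ⟨M4, h14, h24⟩
    · exact ⟨M4, Relation.ReflTransGen.head ⟨w, hw⟩ h14, h24⟩

/-- Input places of a dead transition are non-decreasing. -/
theorem dead_place_mono (hcf : N.choiceFree) {t : T} {M : P → ℕ} (hd : N.dead t M)
    {p : P} (hp : 0 < N.pre p t) {M' : P → ℕ} (hr : N.Reach M M') : M p ≤ M' p := by
  induction hr with
  | refl => exact le_refl _
  | tail hr' hstep ih =>
    rename_i Mb Mc
    obtain ⟨u, hu, rfl⟩ := hstep
    have hut : u ≠ t := fun h => hd Mb hr' (h ▸ hu)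
    have : N.pre p u = 0 := cf_pre_eq_zero hcf hut hp
    simp only [fire, this]
    omega

/-- A dead transition has an input place that remains starved forever. -/
theorem dead_starved [Fintype P] (hcf : N.choiceFree) {t : T} {M : P → ℕ}
    (hd : N.dead t M) :
    ∃ p, 0 < N.pre p t ∧ ∀ M', N.Reach M M' → M' p < N.pre p t := by
  classical
  by_contra hcon
  push_neg at hcon
  have key : ∀ s : Finset P, ∃ Ms, N.Reach M Ms ∧
      ∀ p ∈ s, 0 < N.pre p t → N.pre p t ≤ Ms p := by
    intro s
    induction s using Finset.induction_on with
    | empty => exact ⟨M, Relation.ReflTransGen.refl, by simp⟩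
    | insert _ _ hnotmem =>
      rename_i p s ih
      obtain ⟨M1, hM1r, hM1⟩ := ih
      rcases Nat.eq_zero_or_pos (N.pre p t) with h0 | hpos
      · refine ⟨M1, hM1r, fun q hq hq' => ?_⟩
        rcases Finset.mem_insert.1 hq with rfl | hq
        · omega
        · exact hM1 q hq hq'
      · obtain ⟨Mp, hMpr, hMp⟩ := hcon p hpos
        obtain ⟨M3, h13, hp3⟩ := cf_confluent hcf hMpr hM1r
        refine ⟨M3, hM1r.trans h13, fun q hq hq' => ?_⟩
        rcases Finset.mem_insert.1 hq with rfl | hq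
        · exact le_trans hMp (dead_place_mono hcf (dead_mono hd hMpr) hq' hp3)
        · exact le_trans (hM1 q hq hq')
            (dead_place_mono hcf (dead_mono hd hM1r) hq' h13)
  obtain ⟨Ms, hMsr, hMs⟩ := key Finset.univ
  refine hd Ms hMsr (fun p => ?_)
  rcases Nat.eq_zero_or_pos (N.pre p t) with h0 | hpos
  · omega
  · exact hMs p (Finset.mem_univ p) hpos

end PetriNet
namespace PetriNet

variable {P T : Type} {N : PetriNet P T}

theorem dead_not_mem {t : T} {M : P → ℕ} (hd : N.dead t M) {σ : List T}
    (hf : N.firable M σ) : t ∉ σ := by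
  intro hmem
  obtain ⟨M', hr, he⟩ := firable_mem_enabled hf hmem
  exact hd M' hr he

theorem count_lower [DecidableEq T] (hcf : N.choiceFree) {t t' : T} {p : P}
    (hp : 0 < N.pre p t) (hpost : 0 < N.post t' p) :
    ∀ {σ : List T} {M : P → ℕ}, N.firable M σ → t ∉ σ →
      M p + σ.count t' ≤ N.fireSeq M σ p := by
  intro σ
  induction σ with
  | nil => intro M _ _; simp [fireSeq]
  | cons u σ ih =>
    intro M hf hne
    have hut : u ≠ t := fun h => hne (h ▸ List.mem_cons_self)
    have h0 : N.pre p u = 0 := cf_pre_eq_zero hcf hut hp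
    have hfire : N.fire M u p = M p + N.post u p := by simp [fire, h0]
    have ihr := ih hf.2 (fun h => hne (List.mem_cons_of_mem _ h))
    simp only [fireSeq, List.count_cons]
    by_cases hu : u = t'
    · subst hu
      rw [if_pos (by simp)]
      omega
    · rw [if_neg (by simp [hu])]
      omega

theorem cf_backstep [Fintype P] [DecidableEq T] (hcf : N.choiceFree)
    (hnosource : ∀ p : P, (∃ u, 0 < N.pre p u) → ∃ u, 0 < N.post u p)
    {t : T} {M : P → ℕ} (hd : N.dead t M) :
    ∃ (p : P) (t' : T) (M1 : P → ℕ), 0 < N.pre p t ∧ 0 < N.post t' p ∧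
      N.Reach M M1 ∧ N.dead t' M1 ∧ ∀ M', N.Reach M1 M' → M' p < N.pre p t := by
  classical
  obtain ⟨p, hp, hstarve⟩ := dead_starved hcf hd
  obtain ⟨t', ht'⟩ := hnosource p ⟨t, hp⟩
  set Q : ℕ → Prop := fun n => ∃ σ, N.firable M σ ∧ σ.count t' = n with hQ
  have hQ0 : Q 0 := ⟨[], trivial, rfl⟩
  have hbound : ∀ {σ : List T}, N.firable M σ → σ.count t' < N.pre p t := by
    intro σ hf
    have h1 := count_lower hcf hp ht' hf (dead_not_mem hd hf)
    have h2 := hstarve _ (reach_firable hf)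
    omega
  set B := Nat.findGreatest Q (N.pre p t) with hB
  have hQB : Q B := Nat.findGreatest_spec (Nat.zero_le _) hQ0
  obtain ⟨σB, hσBf, hσBc⟩ := hQB
  refine ⟨p, t', N.fireSeq M σB, hp, ht', reach_firable hσBf, ?_, ?_⟩
  · intro M'' hr he
    obtain ⟨ρ, hρf, hρe⟩ := reach_iff.1 hr
    have hft : N.firable M (σB ++ ρ ++ [t']) := by
      refine firable_append.2 ⟨firable_append.2 ⟨hσBf, hρf⟩, ?_⟩
      rw [fireSeq_append, hρe]
      exact ⟨he, trivial⟩
    have hlt := hbound hft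
    have hcount : (σB ++ ρ ++ [t']).count t' = B + ρ.count t' + 1 := by
      simp [List.count_append, hσBc]
      omega
    have hng : ¬ Q ((σB ++ ρ ++ [t']).count t') :=
      Nat.findGreatest_is_greatest (by rw [← hB]; omega) (by omega)
    exact hng ⟨_, hft, rfl⟩
  · intro M' hr
    exact hstarve M' ((reach_firable hσBf).trans hr)

end PetriNet
namespace PetriNet

theorem chain_exists {P T : Type} [Fintype P] (N : PetriNet P T)
    (hcf : N.choiceFree)
    (hnosource : ∀ p : P, (∃ u, 0 < N.pre p u) → ∃ u, 0 < N.post u p)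
    {t0 : T} {Mst : P → ℕ} (hdead0 : N.dead t0 Mst) :
    ∃ (tr : ℕ → T) (Mk : ℕ → P → ℕ) (pl : ℕ → P), tr 0 = t0 ∧ Mk 0 = Mst ∧ ∀ n,
      0 < N.pre (pl n) (tr n) ∧ 0 < N.post (tr (n+1)) (pl n) ∧
      N.Reach (Mk n) (Mk (n+1)) ∧
      ∀ M', N.Reach (Mk (n+1)) M' → M' (pl n) < N.pre (pl n) (tr n) := by
  classical
  have hstep : ∀ x : T × (P → ℕ), N.dead x.1 x.2 →
      ∃ y : T × (P → ℕ), N.dead y.1 y.2 ∧ ∃ p : P, 0 < N.pre p x.1 ∧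
        0 < N.post y.1 p ∧ N.Reach x.2 y.2 ∧
        ∀ M', N.Reach y.2 M' → M' p < N.pre p x.1 := by
    rintro ⟨t, M⟩ hd
    obtain ⟨p, t', M1, h1, h2, h3, h4, h5⟩ := cf_backstep hcf hnosource hd
    exact ⟨(t', M1), h4, p, h1, h2, h3, h5⟩
  let S := {x : T × (P → ℕ) // N.dead x.1 x.2}
  let nxt : S → S := fun x =>
    ⟨Classical.choose (hstep x.1 x.2), (Classical.choose_spec (hstep x.1 x.2)).1⟩
  let F : ℕ → S := fun n => nxt^[n] ⟨(t0, Mst), hdead0⟩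
  have hF : ∀ n, F (n+1) = nxt (F n) := fun n => Function.iterate_succ_apply' nxt n _
  have hlink : ∀ n, ∃ p : P, 0 < N.pre p (F n).1.1 ∧
      0 < N.post (F (n+1)).1.1 p ∧ N.Reach (F n).1.2 (F (n+1)).1.2 ∧
      ∀ M', N.Reach (F (n+1)).1.2 M' → M' p < N.pre p (F n).1.1 := by
    intro n
    have h := (Classical.choose_spec (hstep (F n).1 (F n).2)).2
    have e : (F (n+1)).1 = Classical.choose (hstep (F n).1 (F n).2) := by
      rw [hF n]
    rw [e]
    exact h
  refine ⟨fun n => (F n).1.1, fun n => (F n).1.2, fun n => Classical.choose (hlink n),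
    rfl, rfl, fun n => Classical.choose_spec (hlink n)⟩

end PetriNet
theorem stmt17 {Pl T : Type} [Fintype Pl] [Fintype T] (N : PetriNet Pl T) (M0 : Pl → ℕ)
    (hwmg : N.wmg)
    (hnosource : ∀ p : Pl, (∃ t, 0 < N.pre p t) → ∃ t, 0 < N.post t p) :
    N.live M0 ↔
      ∀ (k : ℕ) (hk : 0 < k) (π : Fin k → Pl) (τ : Fin k → T),
        Function.Injective π → Function.Injective τ →
        (∀ (i : Fin k) (t : T), 0 < N.pre (π i) t ↔ t = τ i) →
        (∀ (i : Fin k) (t : T),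
          0 < N.post t (π i) ↔ t = τ ⟨(i.val + k - 1) % k, Nat.mod_lt _ hk⟩) →
        (restrictNet N π).live (fun i => M0 (π i)) := by
  classical
  constructor
  · intro hlive k hk π τ _ _ hpre _
    exact stmt17_forward N M0 hlive k π τ hpre
  · intro hcirc
    by_contra hnl
    obtain ⟨t0, Mst, hreach0, hdead0⟩ := PetriNet.not_live_iff.1 hnl
    obtain ⟨tr, Mk, pl, htr0, hMk0, hlink⟩ :=
      PetriNet.chain_exists N hwmg.1 hnosource hdead0
    have hchain : ∀ a b, a ≤ b → N.Reach (Mk a) (Mk b) := by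
      intro a b hab
      induction b, hab using Nat.le_induction with
      | base => exact Relation.ReflTransGen.refl
      | succ b hab ih => exact ih.trans (hlink b).2.2.1
    obtain ⟨x, y, hxy, hexy⟩ := Finite.exists_ne_map_eq_of_infinite tr
    have hPex : ∃ b, ∃ a, a < b ∧ tr a = tr b := by
      rcases Nat.lt_or_ge x y with h | h
      · exact ⟨y, x, h, hexy⟩
      · exact ⟨x, y, lt_of_le_of_ne h (Ne.symm hxy), hexy.symm⟩
    set b0 := Nat.find hPex with hb0def
    obtain ⟨a0, hab, heq⟩ : ∃ a, a < b0 ∧ tr a = tr b0 := Nat.find_spec hPex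
    have hwin : ∀ i j, a0 ≤ i → i < j → j < b0 → tr i ≠ tr j := by
      intro i j h1 h2 h3 hne
      exact Nat.find_min hPex h3 ⟨i, h2, hne⟩
    have hwin' : ∀ m n, a0 ≤ m → m < b0 → a0 ≤ n → n < b0 → tr m = tr n → m = n := by
      intro m n hm1 hm2 hn1 hn2 he
      rcases lt_trichotomy m n with h | h | h
      · exact absurd he (hwin m n hm1 h hn2)
      · exact h
      · exact absurd he.symm (hwin n m hn1 h hm2)
    set k := b0 - a0 with hkdef
    have hk : 0 < k := by omega
    set J : Fin k → ℕ := fun i => if i.val = 0 then a0 else b0 - i.val with hJdef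
    have hJwin : ∀ i : Fin k, a0 ≤ J i ∧ J i < b0 := by
      intro i
      have := i.isLt
      by_cases h : i.val = 0 <;> simp [hJdef, h] <;> omega
    set τ : Fin k → T := fun i => tr (J i) with hτdef
    set π : Fin k → Pl := fun i => pl (J i) with hπdef
    have hτb : tr b0 = tr a0 := heq.symm
    have hJinj : Function.Injective J := by
      intro i1 i2 h
      have l1 := i1.isLt
      have l2 := i2.isLt
      apply Fin.ext
      simp only [hJdef] at h
      split_ifs at h <;> omega
    have hτinj : Function.Injective τ := by
      intro i1 i2 h
      apply hJinj
      exact hwin' _ _ (hJwin i1).1 (hJwin i1).2 (hJwin i2).1 (hJwin i2).2 h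
    have hpreτ : ∀ i : Fin k, 0 < N.pre (π i) (τ i) := fun i => (hlink (J i)).1
    have hpre_iff : ∀ (i : Fin k) (u : T), 0 < N.pre (π i) u ↔ u = τ i := by
      intro i u
      exact ⟨fun h => hwmg.1 (π i) u (τ i) h (hpreτ i), fun h => h ▸ hpreτ i⟩
    have hπinj : Function.Injective π := by
      intro i1 i2 h
      apply hτinj
      exact hwmg.1 (π i1) (τ i1) (τ i2) (hpreτ i1) (h ▸ hpreτ i2)
    have fact2 : ∀ i : Fin k,
        τ ⟨(i.val + k - 1) % k, Nat.mod_lt _ hk⟩ = tr (J i + 1) := by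
      intro i
      have l1 := i.isLt
      show tr (J ⟨(i.val + k - 1) % k, Nat.mod_lt _ hk⟩) = tr (J i + 1)
      by_cases h0 : i.val = 0
      · have e1 : (i.val + k - 1) % k = k - 1 := by
          rw [h0]
          simp only [Nat.zero_add]
          exact Nat.mod_eq_of_lt (by omega)
        have e2 : J ⟨(i.val + k - 1) % k, Nat.mod_lt _ hk⟩
            = if k - 1 = 0 then a0 else b0 - (k - 1) := by
          show (if ((i.val + k - 1) % k) = 0 then a0 else b0 - ((i.val + k - 1) % k))
              = if k - 1 = 0 then a0 else b0 - (k - 1)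
          rw [e1]
        have e3 : J i + 1 = a0 + 1 := by
          show (if i.val = 0 then a0 else b0 - i.val) + 1 = a0 + 1
          rw [if_pos h0]
        rw [e2, e3]
        by_cases hk1 : k = 1
        · rw [if_pos (by omega)]
          have e4 : a0 + 1 = b0 := by omega
          rw [e4]
          exact heq
        · rw [if_neg (by omega)]
          congr 1
          omega
      · have e1 : (i.val + k - 1) % k = i.val - 1 := by
          have h1 : i.val + k - 1 = (i.val - 1) + 1 * k := by omega
          rw [h1, Nat.add_mul_mod_self_right]
          exact Nat.mod_eq_of_lt (by omega)
        have e2 : J ⟨(i.val + k - 1) % k, Nat.mod_lt _ hk⟩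
            = if i.val - 1 = 0 then a0 else b0 - (i.val - 1) := by
          show (if ((i.val + k - 1) % k) = 0 then a0 else b0 - ((i.val + k - 1) % k))
              = if i.val - 1 = 0 then a0 else b0 - (i.val - 1)
          rw [e1]
        have e3 : J i + 1 = b0 - i.val + 1 := by
          show (if i.val = 0 then a0 else b0 - i.val) + 1 = b0 - i.val + 1
          rw [if_neg h0]
        rw [e2, e3]
        by_cases h1 : i.val = 1
        · rw [if_pos (by omega)]
          have e4 : b0 - i.val + 1 = b0 := by omega
          rw [e4]
          exact heq
        · rw [if_neg (by omega)]
          congr 1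
          omega
    have hpostτ : ∀ i : Fin k,
        0 < N.post (τ ⟨(i.val + k - 1) % k, Nat.mod_lt _ hk⟩) (π i) := by
      intro i
      rw [fact2 i]
      exact (hlink (J i)).2.1
    have hpost_iff : ∀ (i : Fin k) (u : T),
        0 < N.post u (π i) ↔ u = τ ⟨(i.val + k - 1) % k, Nat.mod_lt _ hk⟩ := by
      intro i u
      exact ⟨fun h => hwmg.2 (π i) u _ h (hpostτ i), fun h => h ▸ hpostτ i⟩
    have hlive' := hcirc k hk π τ hπinj hτinj hpre_iff hpost_iff
    -- starvation at Mk b0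
    have hstarveF : ∀ (i : Fin k) (M' : Pl → ℕ), N.Reach (Mk b0) M' →
        M' (π i) < N.pre (π i) (τ i) := by
      intro i M' hr
      have h1 := (hlink (J i)).2.2.2
      exact h1 M' ((hchain (J i + 1) b0 (by have := (hJwin i).2; omega)).trans hr)
    have hreachfin : N.Reach M0 (Mk b0) := by
      refine hreach0.trans ?_
      rw [← hMk0]
      exact hchain 0 b0 (Nat.zero_le _)
    -- transfer to the subnet
    obtain ⟨σ, hσf, hσe⟩ := PetriNet.reach_iff.1 hreachfin
    have htrans := restrict_firable (π := π) hσf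
    have hsubreach : (restrictNet N π).Reach (fun i => M0 (π i)) (fun i => Mk b0 (π i)) := by
      have := PetriNet.reach_firable htrans.1
      rwa [htrans.2, hσe] at this
    obtain ⟨M'', hr'', he''⟩ := hlive' (τ ⟨0, hk⟩) _ hsubreach
    -- invariant: nothing can change in the subnet
    have hinv : ∀ M'', (restrictNet N π).Reach (fun i => Mk b0 (π i)) M'' →
        M'' = fun i => Mk b0 (π i) := by
      intro M'' hr
      induction hr with
      | refl => rfl
      | tail hr' hstep ih =>
        obtain ⟨u, hen, rfl⟩ := hstep
        rw [ih] at hen ⊢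
        by_cases hu : ∃ i : Fin k, u = τ i
        · obtain ⟨i, rfl⟩ := hu
          have h1 := hen i
          have h2 := hstarveF i (Mk b0) Relation.ReflTransGen.refl
          simp only [restrictNet] at h1
          omega
        · push_neg at hu
          funext i
          have h1 : N.pre (π i) u = 0 := by
            by_contra h
            exact hu i ((hpre_iff i u).1 (Nat.pos_of_ne_zero h))
          have h2 : N.post u (π i) = 0 := by
            by_contra h
            exact hu _ ((hpost_iff i u).1 (Nat.pos_of_ne_zero h))
          simp [PetriNet.fire, restrictNet, h1, h2]
    rw [hinv M'' hr''] at he''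
    have h1 := he'' ⟨0, hk⟩
    have h2 := hstarveF ⟨0, hk⟩ (Mk b0) Relation.ReflTransGen.refl
    simp only [restrictNet] at h1
    omega
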